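/- Let r ∈ {1,2}, σ > 1/2, A > 0, and for each prime p let x_p = p^{−σ} and 𝒢_p(θ) = −log(1 − 2 x_p cos(rθ) + x_p²) − δ·log(1 − x_p), with δ = 1 if r = 2 and δ = 0 otherwise. Then the supremum over all finite sets P of primes of the product Π_{p ∈ P} ∫₀^π exp(2A·𝒢_p(θ)) (2/π) sin²θ dθ is finite. -/

import Mathlib

open Real


lemma exp_quad {t M : ℝ} (hM : 1 ≤ M) (ht : |t| ≤ M) :
    Real.exp t ≤ 1 + t + t ^ 2 * Real.exp M := by
  have he1 : (2:ℝ) ≤ Real.exp M := by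
    have h := Real.add_one_le_exp M
    have := Real.add_one_le_exp (M - 1)
    nlinarith [Real.exp_pos (M-1), Real.exp_pos M]
  rcases le_or_gt t (-1) with h | h
  · have h1 : Real.exp t ≤ 1 := Real.exp_le_one_iff.2 (by linarith)
    nlinarith [sq_nonneg t]
  rcases le_or_gt t 1 with h2 | h2
  · have hb := Real.exp_bound (x := t) (n := 2) (abs_le.2 ⟨by linarith, h2⟩) (by norm_num)
    have hsum : (∑ i ∈ Finset.range 2, t ^ i / (Nat.factorial i)) = 1 + t := by
      simp [Finset.sum_range_succ]
    rw [hsum] at hb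
    have h3 : Real.exp t - (1 + t) ≤ |t| ^ 2 * (3 / ((2:ℕ).factorial * 2)) :=
      (abs_le.1 hb).2
    have h4 : (|t|:ℝ) ^ 2 = t ^ 2 := sq_abs t
    norm_num [h4] at h3
    nlinarith [sq_nonneg t]
  · have h3 : Real.exp t ≤ Real.exp M := Real.exp_le_exp.2 ((abs_le.1 ht).2)
    have h5 : (1:ℝ) ≤ t ^ 2 := by nlinarith
    nlinarith [mul_le_mul_of_nonneg_right h5 (Real.exp_pos M).le]
lemma inv_le_of_one_le_mul {y E : ℝ} (hy : 0 < y) (h : 1 ≤ y * E) : y⁻¹ ≤ E := by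
  calc y⁻¹ = 1 * y⁻¹ := (one_mul _).symm
    _ ≤ (y*E) * y⁻¹ := mul_le_mul_of_nonneg_right h (inv_nonneg.2 hy.le)
    _ = E * (y * y⁻¹) := by ring
    _ = E := by rw [mul_inv_cancel₀ hy.ne', mul_one]

lemma poly1 (x c : ℝ) (hx0 : 0 < x) (hx : x ≤ 3/4) (hc1 : -1 ≤ c) (hc2 : c ≤ 1) :
    (1:ℝ) ≤ (1 - 2*x*c + x^2) * (1 + 2*x*c + 200*x^2) := by
  have f1 : 0 ≤ x^2*(1 - c^2) := mul_nonneg (sq_nonneg x) (by nlinarith)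
  have f2 : 0 ≤ x^2*x*(1 - c) := mul_nonneg (mul_nonneg (sq_nonneg x) hx0.le) (by linarith)
  have f3 : 0 ≤ x^2*(197 - 398*x + 200*x^2) :=
    mul_nonneg (sq_nonneg x) (by nlinarith [sq_nonneg (x - 3/4)])
  nlinarith [f1, f2, f3]

lemma poly2 (x : ℝ) (hx0 : 0 < x) (hx : x ≤ 3/4) : (1:ℝ) ≤ (1-x)*(1+x+4*x^2) := by
  have f : 0 ≤ x^2*(3 - 4*x) := mul_nonneg (sq_nonneg x) (by linarith)
  nlinarith [f]

set_option maxHeartbeats 1000000 in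
lemma pointwise_bound (A x c δ : ℝ) (hA : 0 < A) (hx0 : 0 < x) (hx : x ≤ 3/4)
    (hc : |c| ≤ 1) (hδ : δ = 0 ∨ δ = 1) :
    Real.exp (2*A*(-Real.log (1 - 2*x*c + x^2) - δ * Real.log (1-x)))
      ≤ 1 + 4*A*x*c + 2*A*δ*x + (500*A + 200000*A^2*Real.exp (250*A+1)) * x^2 := by
  obtain ⟨hc1, hc2⟩ := abs_le.1 hc
  have hxc : x*c ≤ x := mul_le_of_le_one_right hx0.le hc2
  have hxc2 : -x ≤ x*c := by nlinarith [mul_le_mul_of_nonneg_left hc1 hx0.le]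
  have hx2 : x^2 ≤ (3/4)*x := by nlinarith
  have hy0 : (0:ℝ) < 1 - 2*x*c + x^2 := by nlinarith [sq_nonneg (1-x)]
  have hlogle : Real.log (1 - 2*x*c + x^2) ≤ (1 - 2*x*c + x^2) - 1 :=
    Real.log_le_sub_one_of_pos hy0
  have hlogge : 1 - (1 - 2*x*c + x^2)⁻¹ ≤ Real.log (1 - 2*x*c + x^2) :=
    Real.one_sub_inv_le_log_of_pos hy0
  have hL1 : -x^2 ≤ -Real.log (1 - 2*x*c + x^2) - 2*x*c := by linarith
  have h7 : (1 - 2*x*c + x^2)⁻¹ ≤ 1 + 2*x*c + 200*x^2 :=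
    inv_le_of_one_le_mul hy0 (poly1 x c hx0 hx hc1 hc2)
  have hL2 : -Real.log (1 - 2*x*c + x^2) - 2*x*c ≤ 200*x^2 := by linarith
  have h1x : (0:ℝ) < 1 - x := by linarith
  have hD1 : x ≤ -Real.log (1-x) := by
    have := Real.log_le_sub_one_of_pos h1x; linarith
  have hD2 : -Real.log (1-x) ≤ x + 4*x^2 := by
    have h8 := Real.one_sub_inv_le_log_of_pos h1x
    have h9 : (1-x)⁻¹ ≤ 1 + x + 4*x^2 := inv_le_of_one_le_mul h1x (poly2 x hx0 hx)
    linarith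
  have hDlo : δ*x ≤ -(δ * Real.log (1-x)) := by
    rcases hδ with h|h <;> rw [h]
    · simp
    · simpa using hD1
  have hDup : -(δ * Real.log (1-x)) ≤ δ*x + 4*x^2 := by
    rcases hδ with h|h <;> rw [h]
    · simp only [zero_mul, neg_zero, zero_add]
      positivity
    · simpa using hD2
  have hδ0 : 0 ≤ δ := by rcases hδ with h|h <;> simp [h]
  have hδ1 : δ ≤ 1 := by rcases hδ with h|h <;> simp [h]
  obtain ⟨G, hG⟩ : ∃ G : ℝ, G = -Real.log (1 - 2*x*c + x^2) - δ * Real.log (1-x) := ⟨_, rfl⟩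
  rw [← hG]
  have hEup : G ≤ 2*x*c + δ*x + 204*x^2 := by
    rw [hG]
    have : -Real.log (1 - 2*x*c + x^2) - δ * Real.log (1-x)
      = (-Real.log (1 - 2*x*c + x^2) - 2*x*c) + (-(δ * Real.log (1-x))) + 2*x*c := by ring
    rw [this]; linarith
  have hElo : 2*x*c + δ*x - x^2 ≤ G := by
    rw [hG]
    have : -Real.log (1 - 2*x*c + x^2) - δ * Real.log (1-x)
      = (-Real.log (1 - 2*x*c + x^2) - 2*x*c) + (-(δ * Real.log (1-x))) + 2*x*c := by ring
    rw [this]; linarith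
  have hδx : 0 ≤ δ*x := mul_nonneg hδ0 hx0.le
  have hδx' : δ*x ≤ x := mul_le_of_le_one_left hx0.le hδ1
  have hGup : G ≤ 156*x := by linarith
  have hGlo : -(156*x) ≤ G := by linarith
  have hAx : A*x ≤ A*(3/4) := mul_le_mul_of_nonneg_left hx hA.le
  have h2A : (0:ℝ) ≤ 2*A := by linarith
  have hM : (1:ℝ) ≤ 250*A+1 := by linarith
  have hu := mul_le_mul_of_nonneg_left hGup h2A
  have hl := mul_le_mul_of_nonneg_left hGlo h2A
  have htM : |2*A*G| ≤ 250*A+1 := by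
    rw [abs_le]
    constructor <;> nlinarith [hu, hl, hAx]
  have hq := exp_quad hM htM
  have hG2 : G^2 ≤ 24336 * x^2 := by
    have := sq_le_sq' hGlo hGup
    nlinarith [this]
  have h2 : A^2*G^2 ≤ A^2*(24336*x^2) := mul_le_mul_of_nonneg_left hG2 (sq_nonneg A)
  have h3 : A^2*G^2 * Real.exp (250*A+1) ≤ A^2*(24336*x^2) * Real.exp (250*A+1) :=
    mul_le_mul_of_nonneg_right h2 (Real.exp_pos _).le
  have h4 := mul_le_mul_of_nonneg_left hEup h2A
  have h5 : (2*A*G)^2 * Real.exp (250*A+1) = 4*(A^2*G^2 * Real.exp (250*A+1)) := by ring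
  have hp1 : 0 ≤ A*x^2 := mul_nonneg hA.le (sq_nonneg x)
  have hp2 : 0 ≤ A^2*x^2*Real.exp (250*A+1) :=
    mul_nonneg (mul_nonneg (sq_nonneg A) (sq_nonneg x)) (Real.exp_pos _).le
  have h3' : A^2*G^2 * Real.exp (250*A+1) ≤ 24336*(A^2*x^2*Real.exp (250*A+1)) := by
    have e2 : A^2*(24336*x^2) * Real.exp (250*A+1) = 24336*(A^2*x^2*Real.exp (250*A+1)) := by ring
    linarith [h3, e2.le]
  have e1 : (500*A + 200000*A^2*Real.exp (250*A+1)) * x^2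
      = 500*(A*x^2) + 200000*(A^2*x^2*Real.exp (250*A+1)) := by ring
  calc Real.exp (2*A*G) ≤ 1 + 2*A*G + (2*A*G)^2 * Real.exp (250*A+1) := hq
    _ ≤ 1 + 4*A*x*c + 2*A*δ*x + (500*A + 200000*A^2*Real.exp (250*A+1)) * x^2 := by
        rw [h5, e1]
        linarith [h4, h3', hp1, hp2]

set_option maxHeartbeats 1000000 in
lemma factor_le (r : ℕ) (hr : r = 1 ∨ r = 2) (A x : ℝ) (hA : 0 < A)
    (hx0 : 0 < x) (hx : x ≤ 3/4) :
    (∫ θ in (0:ℝ)..Real.pi,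
      Real.exp (2 * A * (-Real.log (1 - 2 * x * Real.cos (r * θ) + x ^ 2)
        - (if r = 2 then (1:ℝ) else 0) * Real.log (1 - x))) *
      ((2 / Real.pi) * (Real.sin θ) ^ 2))
      ≤ 1 + (500*A + 200000*A^2*Real.exp (250*A+1)) * x^2 := by
  obtain ⟨K, hK⟩ : ∃ K, K = 500*A + 200000*A^2*Real.exp (250*A+1) := ⟨_, rfl⟩
  obtain ⟨δ, hδeq⟩ : ∃ δ : ℝ, δ = if r = 2 then (1:ℝ) else 0 := ⟨_, rfl⟩
  rw [show (500*A + 200000*A^2*Real.exp (250*A+1)) = K from hK.symm,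
    show (if r = 2 then (1:ℝ) else 0) = δ from hδeq.symm]
  have hδ : δ = 0 ∨ δ = 1 := by
    rw [hδeq]; by_cases h : r = 2 <;> simp [h]
  have hw : ∀ θ : ℝ, 0 ≤ 2 / Real.pi * Real.sin θ ^ 2 := fun θ => by positivity
  have hy0 : ∀ θ : ℝ, (0:ℝ) < 1 - 2 * x * Real.cos (r * θ) + x ^ 2 := by
    intro θ
    have h1 := Real.neg_one_le_cos (r * θ)
    have h2 := Real.cos_le_one (r * θ)
    nlinarith [sq_nonneg (1-x)]
  have c1 : Continuous fun θ : ℝ => Real.sin θ ^ 2 := Real.continuous_sin.pow 2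
  have c2 : Continuous fun θ : ℝ => Real.cos (r * θ) :=
    Real.continuous_cos.comp (continuous_const.mul continuous_id)
  have c3 : Continuous fun θ : ℝ => 2 / Real.pi * Real.sin θ ^ 2 := continuous_const.mul c1
  have c4 : Continuous fun θ : ℝ => 1 - 2 * x * Real.cos (r * θ) + x ^ 2 :=
    (continuous_const.sub (continuous_const.mul c2)).add continuous_const
  have c5 : Continuous fun θ : ℝ => Real.cos (r * θ) * Real.sin θ ^ 2 := c2.mul c1
  have hcf : Continuous fun θ : ℝ =>
      Real.exp (2 * A * (-Real.log (1 - 2 * x * Real.cos (r * θ) + x ^ 2)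
        - δ * Real.log (1 - x))) * (2 / Real.pi * Real.sin θ ^ 2) := by
    apply Continuous.mul ?_ c3
    apply Real.continuous_exp.comp
    apply continuous_const.mul
    apply Continuous.sub ?_ continuous_const
    exact (Continuous.log c4 (fun θ => (hy0 θ).ne')).neg
  have hcg : Continuous fun θ : ℝ =>
      (1 + 2*A*δ*x + K*x^2) * (2 / Real.pi * Real.sin θ ^ 2)
        + (4*A*x*(2/Real.pi)) * (Real.cos (r * θ) * Real.sin θ ^ 2) :=
    (continuous_const.mul c3).add (continuous_const.mul c5)
  have hmono := intervalIntegral.integral_mono_on (μ := MeasureTheory.volume)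
    Real.pi_pos.le (hcf.intervalIntegrable 0 Real.pi) (hcg.intervalIntegrable 0 Real.pi)
    (fun θ _ => by
      have hpb := pointwise_bound A x (Real.cos (r * θ)) δ hA hx0 hx
        (Real.abs_cos_le_one _) hδ
      rw [← hK] at hpb
      have := mul_le_mul_of_nonneg_right hpb (hw θ)
      calc Real.exp (2 * A * (-Real.log (1 - 2 * x * Real.cos (r * θ) + x ^ 2)
              - δ * Real.log (1 - x))) * (2 / Real.pi * Real.sin θ ^ 2)
          ≤ (1 + 4*A*x*Real.cos (r*θ) + 2*A*δ*x + K*x^2) * (2 / Real.pi * Real.sin θ ^ 2) := this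
        _ = (1 + 2*A*δ*x + K*x^2) * (2 / Real.pi * Real.sin θ ^ 2)
            + (4*A*x*(2/Real.pi)) * (Real.cos (r * θ) * Real.sin θ ^ 2) := by ring)
  have hsin2 : (∫ θ in (0:ℝ)..Real.pi, Real.sin θ ^ 2) = Real.pi / 2 := by
    rw [integral_sin_sq]; simp
  have hsplit : (∫ θ in (0:ℝ)..Real.pi,
      ((1 + 2*A*δ*x + K*x^2) * (2 / Real.pi * Real.sin θ ^ 2)
        + (4*A*x*(2/Real.pi)) * (Real.cos (r * θ) * Real.sin θ ^ 2)))
      = (1 + 2*A*δ*x + K*x^2) * (2 / Real.pi * (Real.pi/2))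
        + (4*A*x*(2/Real.pi)) * (∫ θ in (0:ℝ)..Real.pi, Real.cos (r * θ) * Real.sin θ ^ 2) := by
    rw [intervalIntegral.integral_add
      ((Continuous.intervalIntegrable (u := fun θ : ℝ => (1 + 2*A*δ*x + K*x^2) * (2 / Real.pi * Real.sin θ ^ 2)) (continuous_const.mul c3) 0 Real.pi))
      ((Continuous.intervalIntegrable (u := fun θ : ℝ => (4*A*x*(2/Real.pi)) * (Real.cos (r * θ) * Real.sin θ ^ 2)) (continuous_const.mul c5) 0 Real.pi)),
      intervalIntegral.integral_const_mul, intervalIntegral.integral_const_mul,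
      intervalIntegral.integral_const_mul, hsin2]
  have hJ : (∫ θ in (0:ℝ)..Real.pi, Real.cos (r * θ) * Real.sin θ ^ 2)
      = if r = 2 then -(Real.pi/4) else 0 := by
    rcases hr with h | h <;> subst h
    · have hid : ∀ θ : ℝ, Real.cos ((1:ℕ) * θ) * Real.sin θ ^ 2
          = Real.sin θ ^ 2 * Real.cos θ := fun θ => by push_cast; rw [one_mul]; ring
      simp_rw [hid, integral_sin_sq_mul_cos]
      norm_num
    · have hid : ∀ θ : ℝ, Real.cos ((2:ℕ) * θ) * Real.sin θ ^ 2
          = Real.sin θ ^ 2 - 2 * Real.sin θ ^ 4 := fun θ => by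
        push_cast
        rw [Real.cos_two_mul']
        linear_combination (Real.sin θ ^ 2) * (Real.sin_sq_add_cos_sq θ)
      simp_rw [hid]
      rw [intervalIntegral.integral_sub (c1.intervalIntegrable 0 Real.pi)
        (Continuous.intervalIntegrable (u := fun θ : ℝ => 2 * Real.sin θ ^ 4) (continuous_const.mul (Real.continuous_sin.pow 4)) 0 Real.pi),
        intervalIntegral.integral_const_mul, hsin2]
      have h4 : (∫ θ in (0:ℝ)..Real.pi, Real.sin θ ^ 4) = 3 * Real.pi / 8 := by
        have := integral_sin_pow (a := 0) (b := Real.pi) 2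
        norm_num at this
        rw [this]
        ring
      rw [h4]
      norm_num
      ring
  have hπ : Real.pi ≠ 0 := Real.pi_ne_zero
  have hfinal : (1 + 2*A*δ*x + K*x^2) * (2 / Real.pi * (Real.pi/2))
      + (4*A*x*(2/Real.pi)) * (if r = 2 then -(Real.pi/4) else 0) = 1 + K*x^2 := by
    rcases hr with h | h <;> subst h
    · have hδ0 : δ = 0 := by rw [hδeq]; norm_num
      rw [hδ0, if_neg (by norm_num : ¬ (1:ℕ) = 2)]
      field_simp
      ring
    · have hδ1 : δ = 1 := by rw [hδeq]; norm_num
      rw [hδ1, if_pos rfl]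
      field_simp
      ring
  calc _ ≤ _ := hmono
    _ = _ := hsplit
    _ = 1 + K*x^2 := by rw [hJ, hfinal]

set_option maxHeartbeats 1000000 in
theorem stmt_16 (r : ℕ) (hr : r = 1 ∨ r = 2) (σ : ℝ) (hσ : 1/2 < σ) (A : ℝ) (hA : 0 < A) :
    ∃ B : ℝ, ∀ P : Finset ℕ, (∀ p ∈ P, p.Prime) →
      (∏ p ∈ P, ∫ θ in (0:ℝ)..Real.pi,
          Real.exp (2 * A *
            (-Real.log (1 - 2 * (p : ℝ) ^ (-σ) * Real.cos (r * θ) + ((p : ℝ) ^ (-σ)) ^ 2)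
              - (if r = 2 then (1:ℝ) else 0) * Real.log (1 - (p : ℝ) ^ (-σ)))) *
          ((2 / Real.pi) * (Real.sin θ) ^ 2)) ≤ B := by
  set K := 500*A + 200000*A^2*Real.exp (250*A+1) with hKdef
  have hK0 : 0 ≤ K := by positivity
  have hsum : Summable (fun n : ℕ => (n : ℝ) ^ (-(2*σ))) :=
    Real.summable_nat_rpow.2 (by linarith)
  refine ⟨Real.exp (K * ∑' n : ℕ, (n : ℝ) ^ (-(2*σ))), fun P hP => ?_⟩
  have hterm : ∀ n : ℕ, 0 ≤ (n : ℝ) ^ (-(2*σ)) := fun n =>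
    Real.rpow_nonneg (Nat.cast_nonneg n) _
  have hfac : ∀ p ∈ P, (∫ θ in (0:ℝ)..Real.pi,
      Real.exp (2 * A *
        (-Real.log (1 - 2 * (p : ℝ) ^ (-σ) * Real.cos (r * θ) + ((p : ℝ) ^ (-σ)) ^ 2)
          - (if r = 2 then (1:ℝ) else 0) * Real.log (1 - (p : ℝ) ^ (-σ)))) *
      ((2 / Real.pi) * (Real.sin θ) ^ 2)) ≤ Real.exp (K * (p : ℝ) ^ (-(2*σ))) := by
    intro p hp
    have hp2 : (2:ℝ) ≤ (p:ℝ) := by exact_mod_cast (hP p hp).two_le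
    have hp0 : (0:ℝ) < (p:ℝ) := by linarith
    have hx0 : 0 < (p:ℝ) ^ (-σ) := Real.rpow_pos_of_pos hp0 _
    have hx34 : (p:ℝ) ^ (-σ) ≤ 3/4 := by
      have h1 : (p:ℝ) ^ (-σ) ≤ (2:ℝ) ^ (-σ) := by
        rw [Real.rpow_neg (by norm_num : (0:ℝ) ≤ 2), Real.rpow_neg hp0.le]
        have h2 : (2:ℝ) ^ σ ≤ (p:ℝ) ^ σ :=
          Real.rpow_le_rpow (by norm_num) hp2 (by linarith)
        exact inv_anti₀ (Real.rpow_pos_of_pos (by norm_num) _) h2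
      have h3 : (2:ℝ) ^ (-σ) ≤ (2:ℝ) ^ (-(1/2 : ℝ)) :=
        Real.rpow_le_rpow_of_exponent_le (by norm_num) (by linarith)
      have h4 : (2:ℝ) ^ (-(1/2:ℝ)) ≤ 3/4 := by
        rw [Real.rpow_neg (by norm_num : (0:ℝ) ≤ 2), ← Real.sqrt_eq_rpow]
        have h5 : (4/3 : ℝ) ≤ Real.sqrt 2 := by
          nlinarith [Real.sq_sqrt (by norm_num : (0:ℝ) ≤ 2), Real.sqrt_nonneg 2]
        calc (Real.sqrt 2)⁻¹ ≤ ((4:ℝ)/3)⁻¹ := inv_anti₀ (by norm_num) h5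
          _ ≤ 3/4 := by norm_num
      linarith
    have hxsq : ((p:ℝ) ^ (-σ)) ^ 2 = (p:ℝ) ^ (-(2*σ)) := by
      rw [← Real.rpow_natCast ((p:ℝ) ^ (-σ)) 2, ← Real.rpow_mul hp0.le,
        show -σ * ((2:ℕ):ℝ) = -(2*σ) by push_cast; ring]
    calc _ ≤ 1 + K * ((p:ℝ) ^ (-σ))^2 := factor_le r hr A _ hA hx0 hx34
      _ ≤ Real.exp (K * ((p:ℝ) ^ (-σ))^2) := by
          linarith [Real.add_one_le_exp (K * ((p:ℝ) ^ (-σ))^2)]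
      _ = Real.exp (K * (p : ℝ) ^ (-(2*σ))) := by rw [hxsq]
  have hnn : ∀ p ∈ P, (0:ℝ) ≤ (∫ θ in (0:ℝ)..Real.pi,
      Real.exp (2 * A *
        (-Real.log (1 - 2 * (p : ℝ) ^ (-σ) * Real.cos (r * θ) + ((p : ℝ) ^ (-σ)) ^ 2)
          - (if r = 2 then (1:ℝ) else 0) * Real.log (1 - (p : ℝ) ^ (-σ)))) *
      ((2 / Real.pi) * (Real.sin θ) ^ 2)) := by
    intro p _
    apply intervalIntegral.integral_nonneg Real.pi_pos.le
    intro θ _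
    positivity
  calc (∏ p ∈ P, _) ≤ ∏ p ∈ P, Real.exp (K * (p : ℝ) ^ (-(2*σ))) :=
        Finset.prod_le_prod hnn hfac
    _ = Real.exp (∑ p ∈ P, K * (p : ℝ) ^ (-(2*σ))) := (Real.exp_sum P _).symm
    _ ≤ Real.exp (K * ∑' n : ℕ, (n : ℝ) ^ (-(2*σ))) := by
        rw [Real.exp_le_exp, ← Finset.mul_sum]
        exact mul_le_mul_of_nonneg_left (Summable.sum_le_tsum P (fun n _ => hterm n) hsum) hK0
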